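/- For every 0 < α ≤ β, the bound d_TV(P,Q) ≤ (√β − √α)/(√β + √α) for bounded reweightings is attained: on the two-point set X = {0,1}, take the probability distribution P with P(0) = √β/(√α+√β) and P(1) = √α/(√α+√β), take w(0) = α and w(1) = β, and set m := P(0)·α + P(1)·β and Q(x) := P(x)·w(x)/m; then m = √(αβ) and d_TV(P,Q) = (√β − √α)/(√β + √α). -/

import Mathlib

/-- **Optimality of the bounded-reweighting total-variation bound.**
On the two-point set `Fin 2`, with `P 0 = √β/(√α+√β)`, `P 1 = √α/(√α+√β)`,
`w 0 = α`, `w 1 = β`, `m := P 0 · α + P 1 · β` and `Q x := P x · w x / m`, one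
has `m = √(αβ)` and `d_TV(P,Q) = (√β − √α)/(√β + √α)`. -/
theorem tv_bounded_reweighting_tight
    (α β : ℝ) (hα : 0 < α) (hαβ : α ≤ β)
    (P w : Fin 2 → ℝ)
    (hP0 : P 0 = Real.sqrt β / (Real.sqrt α + Real.sqrt β))
    (hP1 : P 1 = Real.sqrt α / (Real.sqrt α + Real.sqrt β))
    (hw0 : w 0 = α) (hw1 : w 1 = β)
    (m : ℝ) (hm : m = P 0 * α + P 1 * β)
    (Q : Fin 2 → ℝ) (hQ : ∀ x, Q x = P x * w x / m) :
    m = Real.sqrt (α * β) ∧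
      (1 / 2) * ∑ x, |P x - Q x| =
        (Real.sqrt β - Real.sqrt α) / (Real.sqrt β + Real.sqrt α) := by
  have hβ : (0:ℝ) < β := hα.trans_le hαβ
  set a := Real.sqrt α with ha
  set b := Real.sqrt β with hb
  have hap : 0 < a := Real.sqrt_pos.mpr hα
  have hbp : 0 < b := Real.sqrt_pos.mpr hβ
  have hab : a ≤ b := Real.sqrt_le_sqrt hαβ
  have ha2 : a * a = α := Real.mul_self_sqrt hα.le
  have hb2 : b * b = β := Real.mul_self_sqrt hβ.le
  have hs : 0 < a + b := by linarith
  have hm' : m = a * b := by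
    rw [hm, hP0, hP1, ← ha2, ← hb2]; field_simp
  have h1 : m = Real.sqrt (α * β) := by
    rw [hm', ← ha2, ← hb2, show a*a*(b*b) = (a*b)*(a*b) by ring,
      Real.sqrt_mul_self (by positivity)]
  refine ⟨h1, ?_⟩
  have hQ0 : Q 0 = a / (a + b) := by
    rw [hQ 0, hP0, hw0, hm', ← ha2]; field_simp
  have hQ1 : Q 1 = b / (a + b) := by
    rw [hQ 1, hP1, hw1, hm', ← hb2]; field_simp
  rw [Fin.sum_univ_two, hP0, hP1, hQ0, hQ1]
  rw [div_sub_div_same, div_sub_div_same, abs_div, abs_div,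
    abs_of_nonneg (by linarith : (0:ℝ) ≤ b - a),
    abs_of_nonpos (by linarith : a - b ≤ 0), abs_of_pos hs]
  rw [show b + a = a + b by ring]
  field_simp
  ring
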